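/- arXiv:1505.04614 — 2 statements merged into one kernel-verified Lean document; each statement's English description precedes it below -/
import Mathlib

section
/- Let α ∈ (0,1]. There exists a constant C > 0 depending only on α such that for every z ∈ ℝ³, every r > 0 and every x in the closed ball of center z and radius r, ∫_{B(z,r)} ‖t−z‖^{α−1} · ‖t−x‖^{−1} dt ≤ C r^{1+α}, where B(z,r) is the open ball of center z and radius r in ℝ³ and the integral is with respect to Lebesgue measure. -/
open MeasureTheory Set
open scoped ENNReal

section VPEaux

local notation "E3" => EuclideanSpace ℝ (Fin 3)

/-- Polar-coordinates formula for lower integrals of radial functions on `ℝ³`. -/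
private lemma vpe_lintegral_norm (g : ℝ → ℝ≥0∞) (hg : Measurable g) :
    ∫⁻ x : E3, g ‖x‖ =
      (volume : Measure E3).toSphere univ *
        ∫⁻ y in Ioi (0 : ℝ), ENNReal.ofReal (y ^ (2 : ℕ)) * g y := by
  have h0 : MeasurableSet ({0}ᶜ : Set E3) := (measurableSet_singleton _).compl
  have hdim : Module.finrank ℝ E3 - 1 = 2 := by
    simp [finrank_euclideanSpace_fin]
  have hmg : Measurable fun p : Metric.sphere (0 : E3) 1 × Ioi (0 : ℝ) => g p.2 :=
    hg.comp (measurable_subtype_coe.comp measurable_snd)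
  calc ∫⁻ x : E3, g ‖x‖ = ∫⁻ x in ({0}ᶜ : Set E3), g ‖x‖ := by
        rw [MeasureTheory.restrict_compl_singleton]
    _ = ∫⁻ x : ({0}ᶜ : Set E3), g ‖(x : E3)‖ ∂(Measure.comap Subtype.val volume) :=
        (lintegral_subtype_comap h0 _).symm
    _ = ∫⁻ p : Metric.sphere (0 : E3) 1 × Ioi (0 : ℝ), g p.2
          ∂((volume : Measure E3).toSphere.prod (Measure.volumeIoiPow 2)) := by
        rw [← hdim]
        exact Eq.trans (lintegral_congr fun x => by simp)
          (((volume : Measure E3).measurePreserving_homeomorphUnitSphereProd).lintegral_comp_emb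
            (Homeomorph.measurableEmbedding _) fun p => g p.2)
    _ = (volume : Measure E3).toSphere univ * ∫⁻ y : Ioi (0 : ℝ), g y
          ∂(Measure.volumeIoiPow 2) := by
        rw [lintegral_prod _ hmg.aemeasurable]
        simp [lintegral_const, mul_comm]
    _ = (volume : Measure E3).toSphere univ *
          ∫⁻ y in Ioi (0 : ℝ), ENNReal.ofReal (y ^ (2 : ℕ)) * g y := by
        congr 1
        rw [Measure.volumeIoiPow,
          lintegral_withDensity_eq_lintegral_mul _
            (f := fun r : Ioi (0:ℝ) => ENNReal.ofReal ((r : ℝ) ^ (2 : ℕ)))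
            (by fun_prop)
            (g := fun r : Ioi (0:ℝ) => g (r : ℝ)) (by fun_prop)]
        simp only [Pi.mul_apply]
        exact lintegral_subtype_comap measurableSet_Ioi
          fun y => ENNReal.ofReal (y ^ (2 : ℕ)) * g y

/-- Explicit value of the key radial lower integral on a ball centred at the origin. -/
private lemma vpe_lintegral_ball0 {α : ℝ} (hα0 : 0 < α) (hα1 : α ≤ 1)
    {R : ℝ} (hR : 0 < R) :
    ∫⁻ t in Metric.ball (0 : E3) R, ENNReal.ofReal (‖t‖ ^ (α - 2)) =
      (volume : Measure E3).toSphere univ * ENNReal.ofReal (R ^ (α + 1) / (α + 1)) := by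
  set g : ℝ → ℝ≥0∞ :=
    (Ioo (0 : ℝ) R).indicator (fun y => ENNReal.ofReal (y ^ (α - 2))) with hgdef
  have hmg : Measurable g :=
    Measurable.indicator
      (by fun_prop) measurableSet_Ioo
  have hgx : ∀ t : E3, g ‖t‖ =
      (Metric.ball (0 : E3) R).indicator (fun t => ENNReal.ofReal (‖t‖ ^ (α - 2))) t := by
    intro t
    rcases eq_or_ne t 0 with rfl | ht
    · have : ‖(0 : E3)‖ ∉ Ioo (0 : ℝ) R := by simp
      rw [hgdef, indicator_of_notMem this,
        indicator_of_mem (Metric.mem_ball_self hR)]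
      rw [norm_zero, Real.zero_rpow (by linarith)]
      simp
    · have hnt : 0 < ‖t‖ := norm_pos_iff.2 ht
      by_cases htR : ‖t‖ < R
      · rw [hgdef, indicator_of_mem (mem_Ioo.2 ⟨hnt, htR⟩),
          indicator_of_mem (by simpa [Metric.mem_ball, dist_zero_right] using htR)]
      · rw [hgdef, indicator_of_notMem (fun h => htR h.2),
          indicator_of_notMem (by simpa [Metric.mem_ball, dist_zero_right] using htR)]
  have step1 : ∫⁻ t in Metric.ball (0 : E3) R, ENNReal.ofReal (‖t‖ ^ (α - 2)) =
      ∫⁻ t : E3, g ‖t‖ := by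
    rw [← lintegral_indicator Metric.isOpen_ball.measurableSet]
    exact lintegral_congr fun t => (hgx t).symm
  rw [step1, vpe_lintegral_norm g hmg]
  congr 1
  have hind : ∀ y : ℝ, ENNReal.ofReal (y ^ (2 : ℕ)) * g y =
      (Ioo (0 : ℝ) R).indicator
        (fun y => ENNReal.ofReal (y ^ (2 : ℕ)) * ENNReal.ofReal (y ^ (α - 2))) y := by
    intro y
    by_cases hy : y ∈ Ioo (0 : ℝ) R
    · rw [hgdef, indicator_of_mem hy, indicator_of_mem hy]
    · rw [hgdef, indicator_of_notMem hy, indicator_of_notMem hy, mul_zero]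
  calc ∫⁻ y in Ioi (0 : ℝ), ENNReal.ofReal (y ^ (2 : ℕ)) * g y
      = ∫⁻ y in Ioi (0 : ℝ), (Ioo (0 : ℝ) R).indicator
          (fun y => ENNReal.ofReal (y ^ (2 : ℕ)) * ENNReal.ofReal (y ^ (α - 2))) y := by
        exact lintegral_congr fun y => hind y
    _ = ∫⁻ y in Ioo (0 : ℝ) R, ENNReal.ofReal (y ^ (2 : ℕ)) * ENNReal.ofReal (y ^ (α - 2)) := by
        rw [lintegral_indicator measurableSet_Ioo, Measure.restrict_restrict measurableSet_Ioo,
          inter_eq_left.2 Ioo_subset_Ioi_self]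
    _ = ∫⁻ y in Ioo (0 : ℝ) R, ENNReal.ofReal (y ^ α) := by
        refine setLIntegral_congr_fun measurableSet_Ioo (fun y hy => ?_)
        rw [← ENNReal.ofReal_mul (by positivity)]
        congr 1
        rw [← Real.rpow_natCast y 2, ← Real.rpow_add hy.1]
        norm_num
    _ = ENNReal.ofReal (R ^ (α + 1) / (α + 1)) := by
        rw [← ofReal_integral_eq_lintegral_ofReal]
        · congr 1
          rw [← integral_Ioc_eq_integral_Ioo, ← intervalIntegral.integral_of_le hR.le,
            integral_rpow (Or.inl (by linarith)), Real.zero_rpow (by positivity), sub_zero]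
        · exact (intervalIntegrable_iff_integrableOn_Ioo_of_le hR.le).1
            (intervalIntegral.intervalIntegrable_rpow' (by linarith))
        · filter_upwards [ae_restrict_mem measurableSet_Ioo] with y hy
          exact Real.rpow_nonneg hy.1.le _

/-- Translated version. -/
private lemma vpe_lintegral_ball {α : ℝ} (hα0 : 0 < α) (hα1 : α ≤ 1)
    (c : E3) {R : ℝ} (hR : 0 < R) :
    ∫⁻ t in Metric.ball c R, ENNReal.ofReal (‖t - c‖ ^ (α - 2)) =
      (volume : Measure E3).toSphere univ * ENNReal.ofReal (R ^ (α + 1) / (α + 1)) := by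
  rw [← vpe_lintegral_ball0 hα0 hα1 hR]
  have mp : MeasurePreserving (fun t : E3 => t - c) volume volume :=
    measurePreserving_sub_right volume c
  have emb : MeasurableEmbedding (fun t : E3 => t - c) :=
    (Homeomorph.subRight c).measurableEmbedding
  have him : (fun t : E3 => t - c) '' Metric.ball c R = Metric.ball (0 : E3) R := by
    ext u
    constructor
    · rintro ⟨t, ht, rfl⟩
      simpa [Metric.mem_ball, dist_eq_norm] using ht
    · intro hu
      exact ⟨u + c, by simpa [Metric.mem_ball, dist_eq_norm] using hu, add_sub_cancel_right u c⟩
  rw [← him]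
  exact mp.setLIntegral_comp_emb emb (fun t => ENNReal.ofReal (‖t‖ ^ (α - 2))) _

/-- Pointwise bound. -/
private lemma vpe_pointwise {α : ℝ} (hα0 : 0 < α) (hα1 : α ≤ 1)
    {a b : ℝ} (ha : 0 ≤ a) (hb : 0 ≤ b) :
    a ^ (α - 1) * b⁻¹ ≤ a ^ (α - 2) + b ^ (α - 2) := by
  have hra : 0 ≤ a ^ (α - 2) := Real.rpow_nonneg ha _
  have hrb : 0 ≤ b ^ (α - 2) := Real.rpow_nonneg hb _
  rcases eq_or_lt_of_le hb with hb0 | hb0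
  · subst hb0
    simpa using add_nonneg hra hrb
  rcases eq_or_lt_of_le ha with ha0 | ha0
  · subst ha0
    rcases eq_or_lt_of_le hα1 with h1 | h1
    · subst h1
      rw [show (1:ℝ) - 1 = 0 by norm_num, Real.rpow_zero,
        show (1:ℝ) - 2 = -1 by norm_num, Real.zero_rpow (by norm_num),
        Real.rpow_neg_one, one_mul, zero_add]
    · rw [Real.zero_rpow (by linarith : α - 1 ≠ 0), zero_mul]
      exact add_nonneg hra hrb
  · rcases le_total a b with h | h
    · calc a ^ (α - 1) * b⁻¹ ≤ a ^ (α - 1) * a⁻¹ := by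
            gcongr
        _ = a ^ (α - 2) := by
            rw [← Real.rpow_neg_one a, ← Real.rpow_add ha0]
            congr 1
            ring
        _ ≤ a ^ (α - 2) + b ^ (α - 2) := le_add_of_nonneg_right hrb
    · calc a ^ (α - 1) * b⁻¹ ≤ b ^ (α - 1) * b⁻¹ := by
            have h2 : a ^ (α - 1) ≤ b ^ (α - 1) :=
              Real.rpow_le_rpow_of_nonpos hb0 h (by linarith)
            exact mul_le_mul_of_nonneg_right h2 (inv_nonneg.2 hb)
        _ = b ^ (α - 2) := by
            rw [← Real.rpow_neg_one b, ← Real.rpow_add hb0]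
            congr 1
            ring
        _ ≤ a ^ (α - 2) + b ^ (α - 2) := le_add_of_nonneg_left hra

private lemma vpe_main {α : ℝ} (hα0 : 0 < α) (hα1 : α ≤ 1) :
    ∃ C > (0 : ℝ), ∀ (z : E3) (r : ℝ), 0 < r →
      ∀ x ∈ Metric.closedBall z r,
        ∫ t in Metric.ball z r, ‖t - z‖ ^ (α - 1) * ‖t - x‖⁻¹ ≤ C * r ^ (1 + α) := by
  set S : ℝ≥0∞ := (volume : Measure E3).toSphere univ with hSdef
  have hS : S ≠ ⊤ := measure_ne_top _ _
  set T : ℝ := S.toReal with hTdef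
  have hT : 0 ≤ T := ENNReal.toReal_nonneg
  have hα' : (0 : ℝ) < α + 1 := by linarith
  refine ⟨T * (1 + 2 ^ (α + 1)) / (α + 1) + 1, by positivity, fun z r hr x hx => ?_⟩
  set C : ℝ := T * (1 + 2 ^ (α + 1)) / (α + 1) + 1 with hCdef
  have hCpos : 0 < C := by positivity
  have hfm : Measurable fun t : E3 => ‖t - z‖ ^ (α - 1) * ‖t - x‖⁻¹ := by fun_prop
  have hnn : (0 : E3 → ℝ) ≤ fun t => ‖t - z‖ ^ (α - 1) * ‖t - x‖⁻¹ := fun t => by positivity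
  rw [integral_eq_lintegral_of_nonneg_ae (ae_of_all _ hnn) hfm.aestronglyMeasurable]
  apply ENNReal.toReal_le_of_le_ofReal (by positivity)
  have hsub : Metric.ball z r ⊆ Metric.ball x (2 * r) := by
    intro t ht
    rw [Metric.mem_ball] at ht ⊢
    have h1 : dist t x ≤ dist t z + dist z x := dist_triangle t z x
    have h2 : dist z x ≤ r := by
      rw [dist_comm]
      exact Metric.mem_closedBall.1 hx
    linarith
  calc ∫⁻ t in Metric.ball z r, ENNReal.ofReal (‖t - z‖ ^ (α - 1) * ‖t - x‖⁻¹)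
      ≤ ∫⁻ t in Metric.ball z r,
          (ENNReal.ofReal (‖t - z‖ ^ (α - 2)) + ENNReal.ofReal (‖t - x‖ ^ (α - 2))) := by
        refine lintegral_mono fun t => ?_
        rw [← ENNReal.ofReal_add (Real.rpow_nonneg (norm_nonneg _) _)
          (Real.rpow_nonneg (norm_nonneg _) _)]
        exact ENNReal.ofReal_le_ofReal
          (vpe_pointwise hα0 hα1 (norm_nonneg _) (norm_nonneg _))
    _ = (∫⁻ t in Metric.ball z r, ENNReal.ofReal (‖t - z‖ ^ (α - 2))) +
        ∫⁻ t in Metric.ball z r, ENNReal.ofReal (‖t - x‖ ^ (α - 2)) :=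
        lintegral_add_left (by fun_prop) _
    _ ≤ (∫⁻ t in Metric.ball z r, ENNReal.ofReal (‖t - z‖ ^ (α - 2))) +
        ∫⁻ t in Metric.ball x (2 * r), ENNReal.ofReal (‖t - x‖ ^ (α - 2)) := by
        gcongr
    _ = S * ENNReal.ofReal (r ^ (α + 1) / (α + 1)) +
        S * ENNReal.ofReal ((2 * r) ^ (α + 1) / (α + 1)) := by
        rw [vpe_lintegral_ball hα0 hα1 z hr, vpe_lintegral_ball hα0 hα1 x (by linarith)]
    _ ≤ ENNReal.ofReal (C * r ^ (1 + α)) := by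
        have hSo : S = ENNReal.ofReal T := (ENNReal.ofReal_toReal hS).symm
        rw [hSo, ← ENNReal.ofReal_mul hT, ← ENNReal.ofReal_mul hT, ← ENNReal.ofReal_add
          (by positivity) (by positivity)]
        apply ENNReal.ofReal_le_ofReal
        have h2r : (2 * r) ^ (α + 1) = 2 ^ (α + 1) * r ^ (α + 1) :=
          Real.mul_rpow (by norm_num) hr.le
        have hrw : r ^ (1 + α) = r ^ (α + 1) := by rw [add_comm]
        have hrp : 0 ≤ r ^ (α + 1) := Real.rpow_nonneg hr.le _
        rw [hrw, h2r]
        have key : T * (r ^ (α + 1) / (α + 1)) + T * (2 ^ (α + 1) * r ^ (α + 1) / (α + 1)) =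
            (T * (1 + 2 ^ (α + 1)) / (α + 1)) * r ^ (α + 1) := by
          field_simp
        rw [key, hCdef]
        nlinarith [hrp]

end VPEaux

/-- Volume-potential estimate: for `α ∈ (0,1]` there is `C > 0` such that for every ball
`B(z,r)` and every `x` in the closed ball of center `z` and radius `r`,
`∫_{B(z,r)} ‖t−z‖^{α−1} ‖t−x‖⁻¹ dt ≤ C r^{1+α}`. -/
theorem volume_potential_estimate
    (α : ℝ) (hα0 : 0 < α) (hα1 : α ≤ 1) :
    ∃ C > (0 : ℝ), ∀ (z : EuclideanSpace ℝ (Fin 3)) (r : ℝ), 0 < r →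
      ∀ x ∈ Metric.closedBall z r,
        ∫ t in Metric.ball z r, ‖t - z‖ ^ (α - 1) * ‖t - x‖⁻¹ ≤ C * r ^ (1 + α) :=
  vpe_main hα0 hα1
end

section
/- Let κ ≥ 0, let Ω ⊂ ℝ³ be a bounded measurable set, and let f : ℝ³ → ℂ be a bounded measurable function vanishing outside Ω. Define u(x) := ∫_Ω f(z) · e^{iκ‖x−z‖}/(4π‖x−z‖) dz for x ∈ ℝ³. Then there exists a constant C > 0 depending only on κ and Ω (not on f) such that for all x, y ∈ ℝ³, |u(x) − u(y)| ≤ C · (sup_{z} |f(z)|) · ‖x−y‖. -/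
open MeasureTheory Complex Real Metric
open scoped ENNReal

noncomputable abbrev E3' := EuclideanSpace ℝ (Fin 3)

lemma norm_cexp_I_mul_real (κ r : ℝ) : ‖Complex.exp (Complex.I * κ * r)‖ = 1 := by
  rw [Complex.norm_exp]
  simp

lemma norm_kernel_le (κ : ℝ) {x z : E3'} (h : z ≠ x) :
    ‖Complex.exp (Complex.I * (κ:ℂ) * (‖x - z‖:ℂ)) / ((4 * Real.pi * ‖x - z‖ : ℝ):ℂ)‖
      ≤ (1/(4*Real.pi)) * (1/‖x - z‖^2 + 1) := by
  have hr : 0 < ‖x - z‖ := by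
    rw [norm_pos_iff, sub_ne_zero]
    exact fun he => h he.symm
  have hπ : (0:ℝ) < 4 * Real.pi := by positivity
  rw [norm_div, norm_cexp_I_mul_real, Complex.norm_real,
    Real.norm_of_nonneg (by positivity)]
  have h1 : 1/(4*Real.pi*‖x - z‖) = (1/(4*Real.pi)) * (1/‖x - z‖) := by
    field_simp
  rw [h1]
  have h2 : 1/‖x - z‖ ≤ 1/‖x - z‖^2 + 1 := by
    rw [div_add' _ _ _ (by positivity), div_le_div_iff₀ hr (by positivity)]
    nlinarith [sq_nonneg (‖x - z‖ - 1), sq_nonneg ‖x - z‖, hr.le]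
  exact mul_le_mul_of_nonneg_left h2 (by positivity)

lemma ae_ne_restrict (Ω : Set E3') (x : E3') :
    ∀ᵐ z ∂(volume.restrict Ω), z ≠ x := by
  refine ae_restrict_of_ae ?_
  rw [ae_iff]
  have : {z : E3' | ¬ z ≠ x} = {x} := by ext; simp
  rw [this]
  exact measure_singleton x




lemma kernel_lip_aux (κ : ℝ) (hκ : 0 ≤ κ) {a b : ℝ} (hb : 0 < b) (hab : b ≤ a) :
    ‖Complex.exp (Complex.I * κ * a) / (a:ℂ) - Complex.exp (Complex.I * κ * b) / (b:ℂ)‖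
      ≤ (κ/b + 1/b^2) * |a - b| := by
  set g : ℝ → ℂ := fun r => Complex.exp (Complex.I * κ * r) / (r:ℂ) with hg
  set g' : ℝ → ℂ := fun r =>
    ((Complex.I * κ * Complex.exp (Complex.I * κ * r)) * r - Complex.exp (Complex.I * κ * r) * 1)
      / (r:ℂ)^2 with hg'
  have hderiv : ∀ r ∈ Set.Icc b a, HasDerivWithinAt g (g' r) (Set.Icc b a) r := by
    intro r hr
    have hr0 : (0:ℝ) < r := lt_of_lt_of_le hb hr.1
    have h1 : HasDerivAt (fun t : ℝ => Complex.exp (Complex.I * κ * t))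
        (Complex.I * κ * Complex.exp (Complex.I * κ * r)) r := by
      simpa [mul_comm] using (((hasDerivAt_id (r:ℂ)).const_mul (Complex.I * κ)).cexp).comp_ofReal
    have h2 : HasDerivAt (fun t : ℝ => (t : ℂ)) 1 r := (hasDerivAt_id (r:ℂ)).comp_ofReal
    exact ((h1.div h2 (by exact_mod_cast hr0.ne'))).hasDerivWithinAt
  have hbound : ∀ r ∈ Set.Icc b a, ‖g' r‖ ≤ κ/b + 1/b^2 := by
    intro r hr
    have hr0 : (0:ℝ) < r := lt_of_lt_of_le hb hr.1
    have hexp : ‖Complex.exp (Complex.I * κ * r)‖ = 1 := by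
      rw [Complex.norm_exp]
      simp
    have hnum : ‖(Complex.I * κ * Complex.exp (Complex.I * κ * r)) * r
        - Complex.exp (Complex.I * κ * r) * 1‖ ≤ κ * r + 1 := by
      refine (norm_sub_le _ _).trans ?_
      simp only [norm_mul, hexp, Complex.norm_I, Complex.norm_real, norm_one, mul_one, one_mul]
      rw [Real.norm_of_nonneg hκ, Real.norm_of_nonneg hr0.le]
    have hden : ‖((r:ℂ))^2‖ = r^2 := by
      rw [norm_pow, Complex.norm_real, Real.norm_of_nonneg hr0.le]
    rw [hg', norm_div, hden]
    calc ‖_‖ / r^2 ≤ (κ * r + 1) / r^2 := by gcongr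
    _ = κ / r + 1 / r^2 := by field_simp
    _ ≤ κ/b + 1/b^2 := by have := hr.1; gcongr
  have key := Convex.norm_image_sub_le_of_norm_hasDerivWithin_le hderiv hbound (convex_Icc b a)
    (Set.left_mem_Icc.2 hab) (Set.right_mem_Icc.2 hab)
  simpa [Real.norm_eq_abs] using key

lemma one_div_le_aux3 (b : ℝ) (hb : 0 < b) : 1/b ≤ 1/b^2 + 1 := by
  rw [div_add' _ _ _ (by positivity), div_le_div_iff₀ hb (by positivity)]
  nlinarith [sq_nonneg (b-1), sq_nonneg b, hb.le]

lemma const_le (κ b : ℝ) (hκ : 0 ≤ κ) (hb : 0 < b) :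
    κ/b + 1/b^2 ≤ (κ+1)*(1/b^2+1) := by
  have h1 : κ/b ≤ κ*(1/b^2+1) := by
    rw [div_eq_mul_one_div]
    exact mul_le_mul_of_nonneg_left (one_div_le_aux3 b hb) hκ
  nlinarith [one_div_le_aux3 b hb, sq_nonneg (1/b)]

lemma kernel_lip (κ : ℝ) (hκ : 0 ≤ κ) {a b : ℝ} (ha : 0 < a) (hb : 0 < b) :
    ‖Complex.exp (Complex.I * κ * a) / (a:ℂ) - Complex.exp (Complex.I * κ * b) / (b:ℂ)‖
      ≤ (κ+1)*((1/a^2+1) + (1/b^2+1)) * |a - b| := by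
  have hsym : ∀ u v : ℝ, 0 < u → 0 < v → v ≤ u →
      ‖Complex.exp (Complex.I * κ * u) / (u:ℂ) - Complex.exp (Complex.I * κ * v) / (v:ℂ)‖
      ≤ (κ+1)*((1/u^2+1) + (1/v^2+1)) * |u - v| := by
    intro u v hu hv hvu
    refine (kernel_lip_aux κ hκ hv hvu).trans ?_
    have h1 : κ/v + 1/v^2 ≤ (κ+1)*((1/u^2+1) + (1/v^2+1)) := by
      refine (const_le κ v hκ hv).trans ?_
      have : (0:ℝ) ≤ (κ+1)*(1/u^2+1) := by positivity
      nlinarith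
    exact mul_le_mul_of_nonneg_right h1 (abs_nonneg _)
  rcases le_total b a with h | h
  · exact hsym a b ha hb h
  · have := hsym b a hb ha h
    rw [norm_sub_rev, abs_sub_comm] at this
    calc _ ≤ (κ+1)*((1/b^2+1) + (1/a^2+1)) * |a - b| := this
    _ = _ := by ring

lemma kernel_diff (κ : ℝ) (hκ : 0 ≤ κ) {a b : ℝ} (ha : 0 < a) (hb : 0 < b) :
    ‖Complex.exp (Complex.I * κ * a) / ((4 * Real.pi * a : ℝ) : ℂ)
      - Complex.exp (Complex.I * κ * b) / ((4 * Real.pi * b : ℝ) : ℂ)‖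
      ≤ (κ+1)/(4*Real.pi) * ((1/a^2+1) + (1/b^2+1)) * |a - b| := by
  have hπ : (0:ℝ) < 4 * Real.pi := by positivity
  have hrw : ∀ r : ℝ, ((4 * Real.pi * r : ℝ) : ℂ) = ((4 * Real.pi : ℝ) : ℂ) * (r : ℂ) := by
    intro r; push_cast; ring
  rw [hrw, hrw, div_mul_eq_div_div_swap, div_mul_eq_div_div_swap, ← sub_div, norm_div]
  rw [Complex.norm_real, Real.norm_of_nonneg hπ.le]
  rw [div_le_iff₀ hπ] at *
  calc _ ≤ (κ+1)*((1/a^2+1) + (1/b^2+1)) * |a - b| := kernel_lip κ hκ ha hb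
  _ = (κ+1)/(4*Real.pi) * ((1/a^2+1) + (1/b^2+1)) * |a - b| * (4*Real.pi) := by
      field_simp

lemma pow_id_aux (n : ℕ) : (4:ℝ)^(n+1) * ((2:ℝ)⁻¹^n)^3 = 4 * (2:ℝ)⁻¹^n := by
  induction n with
  | zero => norm_num
  | succ n ih => rw [pow_succ ((2:ℝ)⁻¹), mul_pow, pow_succ (4:ℝ)]; ring_nf; ring_nf at ih; nlinarith [ih]

lemma c2_lt_top : ∫⁻ z in ball (0:E3') 1, ENNReal.ofReal (1/‖z‖^2) < ⊤ := by
  set g : E3' → ℝ≥0∞ := fun z => ENNReal.ofReal (1/‖z‖^2) with hgdef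
  set A : ℕ → Set E3' := fun n => ball 0 ((2:ℝ)⁻¹^n) \ ball 0 ((2:ℝ)⁻¹^(n+1)) with hAdef
  have hsub : ball (0:E3') 1 ⊆ {0} ∪ ⋃ n, A n := by
    intro z hz
    by_cases h0 : z = 0
    · exact Or.inl h0
    right
    have hz0 : 0 < ‖z‖ := norm_pos_iff.2 h0
    have hz1 : ‖z‖ < 1 := mem_ball_zero_iff.1 hz
    have hex : ∃ k, (2:ℝ)⁻¹^k ≤ ‖z‖ := by
      obtain ⟨k, hk⟩ := exists_pow_lt_of_lt_one hz0 (by norm_num : (2:ℝ)⁻¹ < 1)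
      exact ⟨k, hk.le⟩
    have hn : (2:ℝ)⁻¹^(Nat.find hex) ≤ ‖z‖ := Nat.find_spec hex
    have hn0 : Nat.find hex ≠ 0 := by
      intro h; rw [h, pow_zero] at hn; linarith
    obtain ⟨m, hm⟩ := Nat.exists_eq_succ_of_ne_zero hn0
    refine Set.mem_iUnion.2 ⟨m, ?_, ?_⟩
    · refine mem_ball_zero_iff.2 (lt_of_not_ge ?_)
      exact Nat.find_min hex (by omega)
    · intro hball
      have := mem_ball_zero_iff.1 hball
      rw [hm, Nat.succ_eq_add_one] at hn
      linarith
  have hA : ∀ n, ∫⁻ z in A n, g z ≤ ENNReal.ofReal (4 * (2:ℝ)⁻¹^n) * volume (ball (0:E3') 1) := by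
    intro n
    have hpos : (0:ℝ) < (2:ℝ)⁻¹^(n+1) := by positivity
    have h1 : ∀ z ∈ A n, g z ≤ ENNReal.ofReal ((4:ℝ)^(n+1)) := by
      intro z hz
      have hz2 : (2:ℝ)⁻¹^(n+1) ≤ ‖z‖ := by
        by_contra h
        exact hz.2 (mem_ball_zero_iff.2 (lt_of_not_ge h))
      apply ENNReal.ofReal_le_ofReal
      have h4 : (1:ℝ)/((2:ℝ)⁻¹^(n+1))^2 = (4:ℝ)^(n+1) := by
        rw [one_div, ← inv_pow, ← inv_pow, inv_inv, ← pow_mul, mul_comm (n+1) 2, pow_mul]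
        norm_num
      calc 1/‖z‖^2 ≤ 1/((2:ℝ)⁻¹^(n+1))^2 := by gcongr
      _ = (4:ℝ)^(n+1) := h4
    calc ∫⁻ z in A n, g z ≤ ∫⁻ _ in A n, ENNReal.ofReal ((4:ℝ)^(n+1)) :=
          setLIntegral_mono measurable_const h1
    _ = ENNReal.ofReal ((4:ℝ)^(n+1)) * volume (A n) := setLIntegral_const _ _
    _ ≤ ENNReal.ofReal ((4:ℝ)^(n+1)) * volume (ball (0:E3') ((2:ℝ)⁻¹^n)) := by
        gcongr; exact Set.diff_subset
    _ = ENNReal.ofReal ((4:ℝ)^(n+1)) * (ENNReal.ofReal (((2:ℝ)⁻¹^n)^(Module.finrank ℝ E3'))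
          * volume (ball (0:E3') 1)) := by
        rw [Measure.addHaar_ball volume 0 (by positivity)]
    _ = ENNReal.ofReal (4 * (2:ℝ)⁻¹^n) * volume (ball (0:E3') 1) := by
        rw [finrank_euclideanSpace_fin, ← mul_assoc, ← ENNReal.ofReal_mul (by positivity),
          pow_id_aux n]
  have hsum : ∑' n, (ENNReal.ofReal (4 * (2:ℝ)⁻¹^n) * volume (ball (0:E3') 1)) < ⊤ := by
    have heq : ∀ n : ℕ, ENNReal.ofReal (4 * (2:ℝ)⁻¹^n) * volume (ball (0:E3') 1)
        = (ENNReal.ofReal 4 * volume (ball (0:E3') 1)) * (ENNReal.ofReal 2⁻¹)^n := by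
      intro n
      rw [ENNReal.ofReal_mul (by norm_num), ENNReal.ofReal_pow (by norm_num)]
      ring
    rw [tsum_congr heq, ENNReal.tsum_mul_left, ENNReal.tsum_geometric]
    refine ENNReal.mul_lt_top (ENNReal.mul_lt_top ENNReal.ofReal_lt_top measure_ball_lt_top) ?_
    rw [ENNReal.inv_lt_top]
    refine tsub_pos_of_lt ?_
    rw [ENNReal.ofReal_lt_one]
    norm_num
  calc ∫⁻ z in ball (0:E3') 1, g z ≤ ∫⁻ z in {0} ∪ ⋃ n, A n, g z := lintegral_mono_set hsub
  _ ≤ (∫⁻ z in ({0}:Set E3'), g z) + ∫⁻ z in ⋃ n, A n, g z := lintegral_union_le _ _ _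
  _ ≤ (∫⁻ z in ({0}:Set E3'), g z) + ∑' n, ∫⁻ z in A n, g z := by
      gcongr; exact lintegral_iUnion_le _ _
  _ < ⊤ := by
      refine ENNReal.add_lt_top.2 ⟨?_, ?_⟩
      · rw [lintegral_singleton, measure_singleton, mul_zero]
        exact ENNReal.zero_lt_top
      · exact lt_of_le_of_lt (ENNReal.tsum_le_tsum hA) hsum

lemma P_bound (Ω : Set E3') (hΩm : MeasurableSet Ω) (x : E3') :
    ∫⁻ z in Ω, ENNReal.ofReal (1/‖x - z‖^2 + 1)
      ≤ (∫⁻ z in ball (0:E3') 1, ENNReal.ofReal (1/‖z‖^2)) + volume (ball (0:E3') 1)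
        + 2 * volume Ω := by
  set g : E3' → ℝ≥0∞ := fun z => ENNReal.ofReal (1/‖x - z‖^2 + 1) with hgdef
  have hmeas : Measurable fun z : E3' => ENNReal.ofReal (1/‖x - z‖^2) := by fun_prop
  have hsplit : (Ω ∩ ball x 1) ∪ (Ω \ ball x 1) = Ω := Set.inter_union_diff Ω (ball x 1)
  have htrans : ∫⁻ z in ball x 1, ENNReal.ofReal (1/‖x - z‖^2)
      = ∫⁻ z in ball (0:E3') 1, ENNReal.ofReal (1/‖z‖^2) := by
    have hφ : MeasurePreserving (fun w : E3' => x - w) volume volume :=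
      Measure.measurePreserving_sub_left volume x
    have hemb : MeasurableEmbedding (fun w : E3' => x - w) :=
      (MeasurableEquiv.subLeft x).measurableEmbedding
    have hpre : (fun w : E3' => x - w) ⁻¹' (ball (0:E3') 1) = ball x 1 := by
      ext w
      simp [mem_ball, dist_eq_norm, norm_sub_rev]
    have := hφ.setLIntegral_comp_preimage_emb hemb
      (fun z => ENNReal.ofReal (1/‖z‖^2)) (ball (0:E3') 1)
    rw [hpre] at this
    exact this
  have h_far : ∫⁻ z in Ω \ ball x 1, g z ≤ 2 * volume Ω := by
    have step1 : ∫⁻ z in Ω \ ball x 1, g z ≤ ∫⁻ _ in Ω \ ball x 1, (2:ℝ≥0∞) := by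
      refine setLIntegral_mono measurable_const fun z hz => ?_
      have h1 : (1:ℝ) ≤ ‖x - z‖ := by
        have h2 := hz.2
        rw [mem_ball, dist_eq_norm] at h2
        rw [norm_sub_rev]
        linarith [not_lt.1 h2]
      have h3 : 1/‖x - z‖^2 ≤ 1 := by
        rw [div_le_one (by positivity)]
        nlinarith
      calc g z ≤ ENNReal.ofReal 2 := ENNReal.ofReal_le_ofReal (by linarith)
      _ = 2 := by norm_num
    rw [setLIntegral_const] at step1
    refine step1.trans ?_
    have : volume (Ω \ ball x 1) ≤ volume Ω := measure_mono Set.diff_subset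
    exact mul_le_mul_right this 2
  have h_near : ∫⁻ z in Ω ∩ ball x 1, g z
      ≤ (∫⁻ z in ball (0:E3') 1, ENNReal.ofReal (1/‖z‖^2)) + volume (ball (0:E3') 1) := by
    have step1 : ∫⁻ z in Ω ∩ ball x 1, g z ≤ ∫⁻ z in ball x 1, g z :=
      lintegral_mono_set Set.inter_subset_right
    have step2 : ∫⁻ z in ball x 1, g z
        ≤ ∫⁻ z in ball x 1, (ENNReal.ofReal (1/‖x - z‖^2) + 1) := by
      refine setLIntegral_mono (by fun_prop) fun z hz => ?_
      calc g z ≤ ENNReal.ofReal (1/‖x-z‖^2) + ENNReal.ofReal 1 := ENNReal.ofReal_add_le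
      _ = ENNReal.ofReal (1/‖x-z‖^2) + 1 := by norm_num
    have step3 : ∫⁻ z in ball x 1, (ENNReal.ofReal (1/‖x - z‖^2) + 1)
        = (∫⁻ z in ball x 1, ENNReal.ofReal (1/‖x - z‖^2)) + volume (ball x 1) := by
      rw [lintegral_add_right _ measurable_const, setLIntegral_const, one_mul]
    rw [step3, htrans, Measure.addHaar_ball_center] at step2
    exact step1.trans step2
  calc ∫⁻ z in Ω, g z = ∫⁻ z in (Ω ∩ ball x 1) ∪ (Ω \ ball x 1), g z := by rw [hsplit]
  _ = (∫⁻ z in Ω ∩ ball x 1, g z) + ∫⁻ z in Ω \ ball x 1, g z := by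
      refine lintegral_union (hΩm.diff measurableSet_ball) ?_
      exact Set.disjoint_left.2 fun z hz1 hz2 => hz2.2 hz1.2
  _ ≤ _ := add_le_add h_near h_far

/-- Global Lipschitz estimate for the Helmholtz volume potential
`u(x) = ∫_Ω f(z) e^{iκ‖x−z‖}/(4π‖x−z‖) dz` with bounded measurable density `f`
supported in a bounded measurable set `Ω ⊂ ℝ³`: there is a constant `C` depending only
on `κ` and `Ω` such that `|u(x) − u(y)| ≤ C (sup‖f‖) ‖x−y‖` for all `x, y`. -/
theorem helmholtz_volume_potential_lipschitz
    (κ : ℝ) (hκ : 0 ≤ κ)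
    (Ω : Set (EuclideanSpace ℝ (Fin 3))) (hΩb : Bornology.IsBounded Ω)
    (hΩm : MeasurableSet Ω) :
    ∃ C > (0 : ℝ), ∀ (f : EuclideanSpace ℝ (Fin 3) → ℂ) (B : ℝ),
      Measurable f → (∀ z, ‖f z‖ ≤ B) → (∀ z ∉ Ω, f z = 0) →
      ∀ x y : EuclideanSpace ℝ (Fin 3),
        ‖(∫ z in Ω, f z * (Complex.exp (Complex.I * (κ : ℂ) * (‖x - z‖ : ℂ)) /
            ((4 * Real.pi * ‖x - z‖ : ℝ) : ℂ)))
          - ∫ z in Ω, f z * (Complex.exp (Complex.I * (κ : ℂ) * (‖y - z‖ : ℂ)) /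
            ((4 * Real.pi * ‖y - z‖ : ℝ) : ℂ))‖
          ≤ C * B * ‖x - y‖ := by
  set M : ℝ≥0∞ := (∫⁻ z in ball (0:E3') 1, ENNReal.ofReal (1/‖z‖^2))
    + volume (ball (0:E3') 1) + 2 * volume Ω with hMdef
  have hM : M ≠ ⊤ := by
    refine (ENNReal.add_lt_top.2 ⟨ENNReal.add_lt_top.2 ⟨c2_lt_top, measure_ball_lt_top⟩, ?_⟩).ne
    exact ENNReal.mul_lt_top (by norm_num) hΩb.measure_lt_top
  set K : E3' → E3' → ℂ := fun x z => Complex.exp (Complex.I * (κ : ℂ) * (‖x - z‖ : ℂ)) /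
      ((4 * Real.pi * ‖x - z‖ : ℝ) : ℂ) with hKdef
  refine ⟨((κ+1)/(4*Real.pi)) * (2*M).toReal + 1, by positivity, ?_⟩
  intro f B hf hfB hsupp x y
  have hB0 : 0 ≤ B := (norm_nonneg (f x)).trans (hfB x)
  -- integrability of the potential integrand
  have hint : ∀ w : E3', IntegrableOn (fun z => f z * K w z) Ω volume := by
    intro w
    constructor
    · exact (hf.mul (by fun_prop)).aestronglyMeasurable
    · rw [hasFiniteIntegral_iff_norm]
      have hae : ∀ᵐ z ∂(volume.restrict Ω),
          ENNReal.ofReal ‖f z * K w z‖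
            ≤ ENNReal.ofReal (B * (1/(4*Real.pi))) * ENNReal.ofReal (1/‖w - z‖^2 + 1) := by
        filter_upwards [ae_ne_restrict Ω w] with z hz
        rw [← ENNReal.ofReal_mul (by positivity)]
        refine ENNReal.ofReal_le_ofReal ?_
        rw [norm_mul, mul_assoc]
        exact mul_le_mul (hfB z) (norm_kernel_le κ hz) (norm_nonneg _) hB0
      calc ∫⁻ z in Ω, ENNReal.ofReal ‖f z * K w z‖
          ≤ ∫⁻ z in Ω, ENNReal.ofReal (B * (1/(4*Real.pi)))
              * ENNReal.ofReal (1/‖w - z‖^2 + 1) := lintegral_mono_ae hae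
      _ = ENNReal.ofReal (B * (1/(4*Real.pi)))
              * ∫⁻ z in Ω, ENNReal.ofReal (1/‖w - z‖^2 + 1) :=
          lintegral_const_mul' _ _ ENNReal.ofReal_ne_top
      _ ≤ ENNReal.ofReal (B * (1/(4*Real.pi))) * M :=
          mul_le_mul_right (P_bound Ω hΩm w) _
      _ < ⊤ := ENNReal.mul_lt_top ENNReal.ofReal_lt_top hM.lt_top
  -- combine the two integrals
  rw [← integral_sub (hint x) (hint y)]
  simp_rw [← mul_sub]
  -- apply the lintegral bound
  set D : ℝ≥0∞ := ENNReal.ofReal (B * ((κ+1)/(4*Real.pi)) * ‖x - y‖) with hDdef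
  have hptwise : ∀ᵐ z ∂(volume.restrict Ω),
      ENNReal.ofReal ‖f z * (K x z - K y z)‖
        ≤ D * (ENNReal.ofReal (1/‖x - z‖^2 + 1) + ENNReal.ofReal (1/‖y - z‖^2 + 1)) := by
    filter_upwards [ae_ne_restrict Ω x, ae_ne_restrict Ω y] with z hzx hzy
    have hrx : 0 < ‖x - z‖ := by
      rw [norm_pos_iff, sub_ne_zero]; exact fun he => hzx he.symm
    have hry : 0 < ‖y - z‖ := by
      rw [norm_pos_iff, sub_ne_zero]; exact fun he => hzy he.symm
    have habs : |‖x - z‖ - ‖y - z‖| ≤ ‖x - y‖ := by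
      have := abs_norm_sub_norm_le (x - z) (y - z)
      rwa [sub_sub_sub_cancel_right] at this
    have hker : ‖K x z - K y z‖
        ≤ (κ+1)/(4*Real.pi) * ((1/‖x - z‖^2+1) + (1/‖y - z‖^2+1)) * ‖x - y‖ := by
      refine (kernel_diff κ hκ hrx hry).trans ?_
      exact mul_le_mul_of_nonneg_left habs (by positivity)
    have hmain : ‖f z * (K x z - K y z)‖
        ≤ (B * ((κ+1)/(4*Real.pi)) * ‖x - y‖) * ((1/‖x - z‖^2+1) + (1/‖y - z‖^2+1)) := by
      rw [norm_mul]
      calc ‖f z‖ * ‖K x z - K y z‖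
          ≤ B * ((κ+1)/(4*Real.pi) * ((1/‖x - z‖^2+1) + (1/‖y - z‖^2+1)) * ‖x - y‖) :=
            mul_le_mul (hfB z) hker (norm_nonneg _) hB0
      _ = _ := by ring
    calc ENNReal.ofReal ‖f z * (K x z - K y z)‖
        ≤ ENNReal.ofReal ((B * ((κ+1)/(4*Real.pi)) * ‖x - y‖)
            * ((1/‖x - z‖^2+1) + (1/‖y - z‖^2+1))) := ENNReal.ofReal_le_ofReal hmain
    _ = D * (ENNReal.ofReal (1/‖x - z‖^2 + 1) + ENNReal.ofReal (1/‖y - z‖^2 + 1)) := by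
        rw [ENNReal.ofReal_mul (by positivity), ENNReal.ofReal_add (by positivity) (by positivity)]
  have hlint : ∫⁻ z in Ω, ENNReal.ofReal ‖f z * (K x z - K y z)‖ ≤ D * (2 * M) := by
    calc ∫⁻ z in Ω, ENNReal.ofReal ‖f z * (K x z - K y z)‖
        ≤ ∫⁻ z in Ω, D * (ENNReal.ofReal (1/‖x - z‖^2 + 1)
            + ENNReal.ofReal (1/‖y - z‖^2 + 1)) := lintegral_mono_ae hptwise
    _ = D * ∫⁻ z in Ω, (ENNReal.ofReal (1/‖x - z‖^2 + 1)
            + ENNReal.ofReal (1/‖y - z‖^2 + 1)) :=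
        lintegral_const_mul' _ _ ENNReal.ofReal_ne_top
    _ = D * ((∫⁻ z in Ω, ENNReal.ofReal (1/‖x - z‖^2 + 1))
            + ∫⁻ z in Ω, ENNReal.ofReal (1/‖y - z‖^2 + 1)) := by
        rw [lintegral_add_left (by fun_prop)]
    _ ≤ D * (M + M) :=
        mul_le_mul_right (add_le_add (P_bound Ω hΩm x) (P_bound Ω hΩm y)) _
    _ = D * (2 * M) := by rw [two_mul]
  have hfinal : ‖∫ z in Ω, f z * (K x z - K y z)‖ ≤ (D * (2 * M)).toReal := by
    refine (norm_integral_le_lintegral_norm _).trans ?_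
    refine ENNReal.toReal_mono ?_ hlint
    exact ENNReal.mul_ne_top ENNReal.ofReal_ne_top (by
      exact (ENNReal.mul_lt_top (by norm_num) hM.lt_top).ne)
  refine hfinal.trans ?_
  rw [ENNReal.toReal_mul, ENNReal.toReal_ofReal (by positivity)]
  have h2M : (0:ℝ) ≤ (2*M).toReal := ENNReal.toReal_nonneg
  nlinarith [mul_nonneg hB0 (norm_nonneg (x - y)), norm_nonneg (x - y),
    mul_nonneg (mul_nonneg hB0 (norm_nonneg (x - y))) h2M]
end
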